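/- Let (Ω, μ) be a probability measure space and let f : Ω → ℝ be a nonnegative function with ∫_Ω f dμ = 1 and such that f · log f is μ-integrable. Then ∫_Ω f log f dμ ≥ (1/2) · ( ∫_Ω | f − 1 | dμ )². -/

import Mathlib

open MeasureTheory Real

private noncomputable def psiAux (t : ℝ) : ℝ := (t + 1) * Real.log t - 2 * (t - 1)

private noncomputable def phiAux (t : ℝ) : ℝ :=
  2 * (t + 2) * (t * Real.log t - t + 1) - 3 * (t - 1) ^ 2

private lemma psiAux_hasDeriv {t : ℝ} (ht : 0 < t) :
    HasDerivAt psiAux (Real.log t + 1 / t - 1) t := by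
  have h1 : HasDerivAt (fun t : ℝ => (t + 1) * Real.log t)
      (1 * Real.log t + (t + 1) * t⁻¹) t :=
    ((hasDerivAt_id t).add_const 1).mul (Real.hasDerivAt_log ht.ne')
  have h2 : HasDerivAt (fun t : ℝ => 2 * (t - 1)) 2 t := by
    simpa using ((hasDerivAt_id t).sub_const 1).const_mul 2
  have := h1.sub h2
  refine this.congr_deriv ?_
  rw [add_mul, mul_inv_cancel₀ ht.ne']
  ring

private lemma phiAux_hasDeriv {t : ℝ} (ht : 0 < t) :
    HasDerivAt phiAux (4 * psiAux t) t := by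
  have h1 : HasDerivAt (fun t : ℝ => t * Real.log t - t + 1) (Real.log t) t := by
    have := (Real.hasDerivAt_mul_log ht.ne').sub (hasDerivAt_id t)
    simpa using this.add_const 1
  have h2 : HasDerivAt (fun t : ℝ => 2 * (t + 2)) 2 t := by
    simpa using ((hasDerivAt_id t).add_const 2).const_mul 2
  have h3 : HasDerivAt (fun t : ℝ => 2 * (t + 2) * (t * Real.log t - t + 1))
      (2 * (t * Real.log t - t + 1) + 2 * (t + 2) * Real.log t) t := h2.mul h1
  have h4 : HasDerivAt (fun t : ℝ => 3 * (t - 1) ^ 2) (3 * (2 * (t - 1))) t := by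
    have := (((hasDerivAt_id t).sub_const 1).pow 2).const_mul 3
    simpa using this
  have := h3.sub h4
  refine this.congr_deriv ?_
  simp only [psiAux]
  ring

private lemma psiAux_mono : MonotoneOn psiAux (Set.Ioi 0) := by
  have hint : interior (Set.Ioi (0:ℝ)) = Set.Ioi 0 := interior_Ioi
  refine monotoneOn_of_deriv_nonneg (convex_Ioi 0) ?_ ?_ ?_
  · intro x hx
    exact ((psiAux_hasDeriv hx).continuousAt).continuousWithinAt
  · rw [hint]; intro x hx; exact (psiAux_hasDeriv hx).differentiableAt.differentiableWithinAt
  · rw [hint]; intro x hx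
    have hx' : (0:ℝ) < x := hx
    rw [(psiAux_hasDeriv hx').deriv]
    have h := Real.log_le_sub_one_of_pos (show (0:ℝ) < 1 / x by positivity)
    rw [Real.log_div one_ne_zero (ne_of_gt hx'), Real.log_one] at h
    linarith

private lemma phiAux_nonneg {t : ℝ} (ht : 0 ≤ t) : 0 ≤ phiAux t := by
  have hphi1 : phiAux 1 = 0 := by simp [phiAux]
  have hpsi1 : psiAux 1 = 0 := by simp [psiAux]
  have hcont : Continuous phiAux := by
    have : Continuous fun t : ℝ => t * Real.log t := Real.continuous_mul_log
    unfold phiAux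
    fun_prop
  rcases le_or_gt t 1 with h | h
  · have hanti : AntitoneOn phiAux (Set.Icc 0 1) := by
      refine antitoneOn_of_deriv_nonpos (convex_Icc 0 1) hcont.continuousOn ?_ ?_
      · rw [interior_Icc]; intro x hx
        exact (phiAux_hasDeriv hx.1).differentiableAt.differentiableWithinAt
      · rw [interior_Icc]; intro x hx
        rw [(phiAux_hasDeriv hx.1).deriv]
        have := psiAux_mono hx.1 (by norm_num : (1:ℝ) ∈ Set.Ioi 0) hx.2.le
        rw [hpsi1] at this
        linarith
    have := hanti (Set.mem_Icc.mpr ⟨ht, h⟩) (Set.mem_Icc.mpr ⟨zero_le_one, le_refl 1⟩) h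
    rw [hphi1] at this; exact this
  · have hmono : MonotoneOn phiAux (Set.Ici 1) := by
      refine monotoneOn_of_deriv_nonneg (convex_Ici 1) hcont.continuousOn ?_ ?_
      · rw [interior_Ici]; intro x hx
        exact (phiAux_hasDeriv (lt_trans one_pos hx)).differentiableAt.differentiableWithinAt
      · rw [interior_Ici]; intro x hx
        rw [(phiAux_hasDeriv (lt_trans one_pos hx)).deriv]
        have := psiAux_mono (by norm_num : (1:ℝ) ∈ Set.Ioi 0)
          (Set.mem_Ioi.mpr (lt_trans one_pos hx)) hx.le
        rw [hpsi1] at this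
        linarith
    have := hmono (Set.mem_Ici.mpr le_rfl) (Set.mem_Ici.mpr h.le) h.le
    rw [hphi1] at this; exact this

private lemma key_ineq {t : ℝ} (ht : 0 ≤ t) :
    3 * (t - 1) ^ 2 ≤ 2 * (t + 2) * (t * Real.log t - t + 1) := by
  have := phiAux_nonneg ht
  unfold phiAux at this
  linarith

theorem stmt_2 {Ω : Type*} [MeasurableSpace Ω] (μ : Measure Ω) [IsProbabilityMeasure μ]
    (f : Ω → ℝ) (hf0 : ∀ x, 0 ≤ f x) (hf1 : ∫ x, f x ∂μ = 1)
    (hflogf : Integrable (fun x => f x * Real.log (f x)) μ) :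
    ∫ x, f x * Real.log (f x) ∂μ ≥ (1 / 2) * (∫ x, |f x - 1| ∂μ) ^ 2 := by
  have hfi : Integrable f μ := by
    by_contra h
    rw [integral_undef h] at hf1
    norm_num at hf1
  set g : Ω → ℝ := fun x => (f x - 1) ^ 2 / (f x + 2) with hg_def
  have hpos : ∀ x, (0:ℝ) < f x + 2 := fun x => by linarith [hf0 x]
  have hg0 : ∀ x, 0 ≤ g x := fun x => div_nonneg (sq_nonneg _) (hpos x).le
  have habs_le : ∀ x, |f x - 1| ≤ f x + 2 := fun x =>
    abs_le.mpr ⟨by linarith [hf0 x], by linarith⟩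
  have hg_le : ∀ x, g x ≤ |f x - 1| := by
    intro x
    rw [hg_def, div_le_iff₀ (hpos x)]
    nlinarith [sq_abs (f x - 1), abs_nonneg (f x - 1), habs_le x]
  have hfm : AEStronglyMeasurable f μ := hfi.1
  have hgm : AEStronglyMeasurable g μ := by
    have hfa : AEMeasurable f μ := hfm.aemeasurable
    exact (((hfa.sub aemeasurable_const).pow_const 2).div
      (hfa.add aemeasurable_const)).aestronglyMeasurable
  have habs_int : Integrable (fun x => |f x - 1|) μ := (hfi.sub (integrable_const 1)).abs
  have hg_int : Integrable g μ := by
    refine habs_int.mono hgm (Filter.Eventually.of_forall fun x => ?_)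
    rw [Real.norm_eq_abs, Real.norm_eq_abs, abs_of_nonneg (hg0 x), abs_abs]
    exact hg_le x
  have hkey : ∀ x, g x ≤ 2 / 3 * (f x * Real.log (f x) - f x + 1) := by
    intro x
    rw [hg_def, div_le_iff₀ (hpos x)]
    nlinarith [key_ineq (hf0 x)]
  have hsub : Integrable (fun x => f x * Real.log (f x) - f x) μ := by
    exact hflogf.sub hfi
  have hadd2 : Integrable (fun x => f x + 2) μ := by
    exact hfi.add (integrable_const 2)
  have hint1 : Integrable (fun x => f x * Real.log (f x) - f x + 1) μ := by
    exact hsub.add (integrable_const 1)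
  set I := ∫ x, f x * Real.log (f x) ∂μ with hI
  have hGle : ∫ x, g x ∂μ ≤ 2 / 3 * I := by
    have h1 : ∫ x, g x ∂μ ≤ ∫ x, 2 / 3 * (f x * Real.log (f x) - f x + 1) ∂μ :=
      integral_mono hg_int (hint1.const_mul _) hkey
    have h2 : ∫ x, 2 / 3 * (f x * Real.log (f x) - f x + 1) ∂μ = 2 / 3 * I := by
      rw [integral_const_mul, integral_add hsub (integrable_const 1),
        integral_sub hflogf hfi, hf1, integral_const]
      simp
      exact hI.symm
    linarith
  set G := ∫ x, g x ∂μ with hG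
  set A := ∫ x, |f x - 1| ∂μ with hA
  have hA0 : 0 ≤ A := integral_nonneg fun x => abs_nonneg _
  have hG0 : 0 ≤ G := integral_nonneg hg0
  have hAc : ∀ c : ℝ, 0 < c → A ≤ c / 2 * G + 1 / (2 * c) * 3 := by
    intro c hc
    have hpt : ∀ x, |f x - 1| ≤ c / 2 * g x + 1 / (2 * c) * (f x + 2) := by
      intro x
      have h2 := hpos x
      have hdiv : g x * (f x + 2) = (f x - 1) ^ 2 := div_mul_cancel₀ _ h2.ne'
      have key2 : 2 * c * |f x - 1| ≤ c ^ 2 * g x + (f x + 2) := by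
        nlinarith [sq_nonneg (c * |f x - 1| - (f x + 2)), hdiv, sq_abs (f x - 1),
          abs_nonneg (f x - 1), hg0 x, h2]
      calc |f x - 1| = (2 * c * |f x - 1|) / (2 * c) := by field_simp
        _ ≤ (c ^ 2 * g x + (f x + 2)) / (2 * c) := by gcongr
        _ = c / 2 * g x + 1 / (2 * c) * (f x + 2) := by field_simp
    have hrhs_int : Integrable (fun x => c / 2 * g x + 1 / (2 * c) * (f x + 2)) μ := by
      exact (hg_int.const_mul _).add (hadd2.const_mul _)
    have h1 : A ≤ ∫ x, (c / 2 * g x + 1 / (2 * c) * (f x + 2)) ∂μ :=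
      integral_mono habs_int hrhs_int hpt
    have h2 : ∫ x, (c / 2 * g x + 1 / (2 * c) * (f x + 2)) ∂μ
        = c / 2 * G + 1 / (2 * c) * 3 := by
      rw [integral_add (hg_int.const_mul _) (hadd2.const_mul _),
        integral_const_mul, integral_const_mul,
        integral_add hfi (integrable_const 2), hf1, integral_const]
      simp only [measure_univ, ENNReal.toReal_one, probReal_univ, smul_eq_mul, one_mul]
      ring
    linarith
  have hA2 : A ^ 2 ≤ 3 * G := by
    rcases eq_or_lt_of_le hG0 with hGz | hGp
    · have hAz : A = 0 := by
        by_contra h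
        have hApos : 0 < A := lt_of_le_of_ne hA0 (Ne.symm h)
        have := hAc (3 / A) (by positivity)
        rw [← hGz] at this
        have heq : (3 / A) / 2 * 0 + 1 / (2 * (3 / A)) * 3 = A / 2 := by
          field_simp
          ring
        rw [heq] at this
        linarith
      rw [hAz, ← hGz]
      norm_num
    · set c := Real.sqrt (3 / G) with hc_def
      have hcpos : 0 < c := Real.sqrt_pos.mpr (by positivity)
      have hc2 : c ^ 2 * G = 3 := by
        rw [hc_def, Real.sq_sqrt (by positivity : (0:ℝ) ≤ 3 / G)]
        field_simp
      have h1 := hAc c hcpos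
      have heq : c / 2 * G + 1 / (2 * c) * 3 = c * G := by
        rw [← hc2]
        field_simp
        ring
      rw [heq] at h1
      nlinarith [h1, hA0, hc2, hGp]
  have hIpos : 3 * G ≤ 2 * I := by linarith
  have : A ^ 2 ≤ 2 * I := le_trans hA2 hIpos
  linarith
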